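/- For |q|<1, |y|<1, |z|<1: ∑_{k=0}^∞ q^{k²} (yz)^k / ((y;q)_{k+1} (z;q)_{k+1}) = ∑_{k=0}^∞ z^k / (y;q)_{k+1}, and moreover ∑_{k=0}^∞ (-1)^k q^{k(k-1)/2} (yz)^k / (z;q)_{k+1} = ∑_{k=0}^∞ (y;q)_k z^k. -/

import Mathlib

noncomputable def qPoch (a q : ℂ) (n : ℕ) : ℂ := ∏ i ∈ Finset.range n, (1 - a * q ^ i)

noncomputable def qPochInf (a q : ℂ) : ℂ := ∏' i : ℕ, (1 - a * q ^ i)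

noncomputable def qBinom (q : ℂ) (m k : ℕ) : ℂ :=
  if k ≤ m then qPoch q q m / (qPoch q q k * qPoch q q (m - k)) else 0

open Filter


lemma qPoch_ne_zero {a q : ℂ} (ha : ‖a‖ < 1) (hq : ‖q‖ < 1) (n : ℕ) : qPoch a q n ≠ 0 := by
  apply Finset.prod_ne_zero_iff.2
  intro i _
  intro h
  have h1 : (1:ℂ) = a * q ^ i := by linear_combination h
  have h3 : (1:ℝ) = ‖a‖ * ‖q‖^i := by
    rw [← norm_pow, ← norm_mul, ← h1]; simp
  have h2 : ‖a‖ * ‖q‖^i ≤ ‖a‖ * 1 := by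
    apply mul_le_mul_of_nonneg_left _ (norm_nonneg a)
    exact pow_le_one₀ (norm_nonneg q) hq.le
  nlinarith

lemma qPoch_succ (a q : ℂ) (n : ℕ) : qPoch a q (n+1) = qPoch a q n * (1 - a * q^n) :=
  Finset.prod_range_succ _ _

lemma qPoch_succ' (a q : ℂ) (n : ℕ) : qPoch a q (n+1) = (1 - a) * qPoch (a*q) q n := by
  rw [qPoch, Finset.prod_range_succ']
  have : ∀ k ∈ Finset.range n, (1 - a * q ^ (k+1)) = (1 - (a*q) * q ^ k) := by
    intro k _; rw [pow_succ']; ring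
  rw [Finset.prod_congr rfl this]
  simp [qPoch, mul_comm]

-- Weierstrass product inequality
lemma weierstrass_prod {s : Finset ℕ} {x : ℕ → ℝ} (h0 : ∀ i ∈ s, 0 ≤ x i)
    (h1 : ∀ i ∈ s, x i ≤ 1) : 1 - ∑ i ∈ s, x i ≤ ∏ i ∈ s, (1 - x i) := by
  induction s using Finset.cons_induction with
  | empty => simp
  | cons a s ha ih =>
    rw [Finset.prod_cons, Finset.sum_cons]
    have hx0 : 0 ≤ x a := h0 a (Finset.mem_cons_self a s)
    have hx1 : x a ≤ 1 := h1 a (Finset.mem_cons_self a s)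
    have ih' := ih (fun i hi => h0 i (Finset.mem_cons_of_mem hi))
      (fun i hi => h1 i (Finset.mem_cons_of_mem hi))
    have hs0 : 0 ≤ ∑ i ∈ s, x i := Finset.sum_nonneg (fun i hi => h0 i (Finset.mem_cons_of_mem hi))
    calc 1 - (x a + ∑ i ∈ s, x i) ≤ (1 - x a) * (1 - ∑ i ∈ s, x i) := by nlinarith
    _ ≤ (1 - x a) * ∏ i ∈ s, (1 - x i) := by
        apply mul_le_mul_of_nonneg_left ih' (by linarith)


lemma norm_qPoch_lower {a q : ℂ} (ha : ‖a‖ < 1) (hq : ‖q‖ < 1) :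
    ∃ c > 0, ∀ n k, c ≤ ‖qPoch (a * q^n) q k‖ := by
  set r := ‖a‖ with hr
  set t := ‖q‖ with ht
  have hr0 : 0 ≤ r := norm_nonneg a
  have ht0 : 0 ≤ t := norm_nonneg q
  have ht1 : t < 1 := hq
  have h1t : 0 < 1 - t := by linarith
  -- choose N with t^N ≤ (1-t)/2
  obtain ⟨N, hN⟩ : ∃ N : ℕ, t^N ≤ (1-t)/2 := by
    have := tendsto_pow_atTop_nhds_zero_of_lt_one ht0 ht1
    have h2 := this.eventually_le_const (show (0:ℝ) < (1-t)/2 by linarith)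
    exact h2.exists
  have h1r : 0 < 1 - r := by linarith
  refine ⟨(1-r)^N * (1/2), by positivity, ?_⟩
  intro n k
  -- step 1: compare with real product
  have step1 : ∏ i ∈ Finset.range k, (1 - r * t^(n+i)) ≤ ‖qPoch (a * q^n) q k‖ := by
    rw [qPoch, norm_prod]
    apply Finset.prod_le_prod
    · intro i _
      have : r * t^(n+i) ≤ r * 1 := by
        apply mul_le_mul_of_nonneg_left (pow_le_one₀ ht0 ht1.le) hr0
      nlinarith
    · intro i _
      have hn1 : ‖a * q^n * q^i‖ = r * t^(n+i) := by
        rw [norm_mul, norm_mul, norm_pow, norm_pow, pow_add]; ring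
      calc 1 - r * t^(n+i) = ‖(1:ℂ)‖ - ‖a * q^n * q^i‖ := by rw [hn1]; simp
      _ ≤ ‖1 - a * q^n * q^i‖ := norm_sub_norm_le _ _
  refine le_trans ?_ step1
  -- step 2: bound the real product from below
  classical
  rw [← Finset.prod_filter_mul_prod_filter_not (Finset.range k) (fun i => n + i < N)]
  have hfac_nonneg : ∀ i : ℕ, (0:ℝ) ≤ 1 - r * t^(n+i) := by
    intro i
    have : r * t^(n+i) ≤ r * 1 := mul_le_mul_of_nonneg_left (pow_le_one₀ ht0 ht1.le) hr0
    nlinarith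
  have hA : (1-r)^N ≤ ∏ i ∈ (Finset.range k).filter (fun i => n + i < N), (1 - r * t^(n+i)) := by
    calc (1-r)^N ≤ (1-r)^((Finset.range k).filter (fun i => n + i < N)).card := by
          apply pow_le_pow_of_le_one (by linarith) (by linarith)
          calc ((Finset.range k).filter (fun i => n + i < N)).card
              ≤ (Finset.range N).card := by
                apply Finset.card_le_card
                intro i hi
                simp only [Finset.mem_filter, Finset.mem_range] at hi ⊢
                omega
          _ = N := Finset.card_range N
    _ ≤ ∏ i ∈ (Finset.range k).filter (fun i => n + i < N), (1 - r * t^(n+i)) := by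
          rw [← Finset.prod_const]
          apply Finset.prod_le_prod
          · intro i _; linarith
          · intro i _
            have : r * t^(n+i) ≤ r * 1 := mul_le_mul_of_nonneg_left (pow_le_one₀ ht0 ht1.le) hr0
            nlinarith
  have hB : (1/2 : ℝ) ≤ ∏ i ∈ (Finset.range k).filter (fun i => ¬ (n + i < N)), (1 - r * t^(n+i)) := by
    have hsum : ∑ i ∈ (Finset.range k).filter (fun i => ¬ (n + i < N)), r * t^(n+i) ≤ 1/2 := by
      have himg : ∑ i ∈ (Finset.range k).filter (fun i => ¬ (n + i < N)), r * t^(n+i)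
          ≤ ∑ m ∈ Finset.Ico N (n+k), r * t^m := by
        rw [show (∑ i ∈ (Finset.range k).filter (fun i => ¬ (n + i < N)), r * t^(n+i))
            = ∑ m ∈ ((Finset.range k).filter (fun i => ¬ (n + i < N))).map (addLeftEmbedding n), r * t^m by
          rw [Finset.sum_map]; rfl]
        apply Finset.sum_le_sum_of_subset_of_nonneg
        · intro m hm
          simp only [Finset.mem_map, Finset.mem_filter, Finset.mem_range, addLeftEmbedding_apply] at hm
          obtain ⟨i, ⟨hik, hiN⟩, rfl⟩ := hm
          simp only [Finset.mem_Ico]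
          omega
        · intro m _ _; positivity
      have hgeom : ∑ m ∈ Finset.Ico N (n+k), r * t^m ≤ t^N / (1-t) := by
        rw [← Finset.mul_sum]
        rcases le_or_gt N (n+k) with h | h
        · rw [Finset.sum_Ico_eq_sum_range]
          have : ∑ i ∈ Finset.range (n+k-N), t^(N+i) = t^N * ∑ i ∈ Finset.range (n+k-N), t^i := by
            rw [Finset.mul_sum]; apply Finset.sum_congr rfl; intro i _; rw [pow_add]
          rw [this]
          have hgs : ∑ i ∈ Finset.range (n+k-N), t^i ≤ 1/(1-t) := by
            have hne : t ≠ 1 := by intro h'; rw [h'] at ht1; linarith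
            rw [geom_sum_eq hne]
            have heq : (t^(n+k-N) - 1)/(t-1) = (1 - t^(n+k-N))/(1-t) := by
              rw [div_eq_div_iff (by intro h'; rw [sub_eq_zero] at h'; exact hne h') (by linarith)]
              ring
            rw [heq]
            have : (0:ℝ) ≤ t^(n+k-N) := by positivity
            gcongr
            linarith
          calc r * (t^N * ∑ i ∈ Finset.range (n+k-N), t^i) ≤ 1 * (t^N * (1/(1-t))) := by
                apply mul_le_mul (by linarith) ?_ (by positivity) (by norm_num)
                exact mul_le_mul_of_nonneg_left hgs (by positivity)
          _ = t^N/(1-t) := by ring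
        · rw [Finset.Ico_eq_empty (by omega)]
          simp
          positivity
      have : t^N/(1-t) ≤ 1/2 := by
        rw [div_le_div_iff₀ h1t (by norm_num)]
        nlinarith
      linarith
    have := weierstrass_prod (s := (Finset.range k).filter (fun i => ¬ (n + i < N)))
      (x := fun i => r * t^(n+i)) (by intro i _; positivity)
      (by intro i _
          show r * t^(n+i) ≤ 1
          have : r * t^(n+i) ≤ r * 1 := mul_le_mul_of_nonneg_left (pow_le_one₀ ht0 ht1.le) hr0
          nlinarith)
    linarith
  calc (1-r)^N * (1/2) ≤ (∏ i ∈ (Finset.range k).filter (fun i => n + i < N), (1 - r * t^(n+i))) *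
        ∏ i ∈ (Finset.range k).filter (fun i => ¬ (n + i < N)), (1 - r * t^(n+i)) := by
        apply mul_le_mul hA hB (by norm_num) (Finset.prod_nonneg (fun i _ => hfac_nonneg i))
  _ = _ := rfl

lemma norm_qPoch_upper {a q : ℂ} (hq : ‖q‖ < 1) :
    ∃ P > 0, ∀ k, ‖qPoch a q k‖ ≤ P := by
  set r := ‖a‖
  set t := ‖q‖
  have ht0 : 0 ≤ t := norm_nonneg q
  have h1t : 0 < 1 - t := by linarith
  refine ⟨Real.exp (r * (1/(1-t))), Real.exp_pos _, fun k => ?_⟩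
  rw [qPoch, norm_prod]
  calc ∏ i ∈ Finset.range k, ‖1 - a * q^i‖
      ≤ ∏ i ∈ Finset.range k, Real.exp (r * t^i) := by
        apply Finset.prod_le_prod (fun i _ => norm_nonneg _)
        intro i _
        calc ‖1 - a * q^i‖ ≤ ‖(1:ℂ)‖ + ‖a * q^i‖ := norm_sub_le _ _
        _ = r * t^i + 1 := by rw [norm_mul, norm_pow, norm_one]; ring
        _ ≤ Real.exp (r * t^i) := Real.add_one_le_exp _
  _ = Real.exp (∑ i ∈ Finset.range k, r * t^i) := (Real.exp_sum _ _).symm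
  _ ≤ Real.exp (r * (1/(1-t))) := by
        apply Real.exp_le_exp.2
        rw [← Finset.mul_sum]
        apply mul_le_mul_of_nonneg_left _ (norm_nonneg a)
        have hne : t ≠ 1 := by intro h'; rw [h'] at hq; linarith
        rw [geom_sum_eq hne]
        have heq : (t^k - 1)/(t-1) = (1 - t^k)/(1-t) := by
          rw [div_eq_div_iff (by intro h'; rw [sub_eq_zero] at h'; exact hne h') (by linarith)]
          ring
        rw [heq]
        have : (0:ℝ) ≤ t^k := by positivity
        gcongr
        linarith


lemma tsum_telescope {f e : ℕ → ℂ} (hf : Summable f) (h : ∀ k, f k = e k - e (k+1))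
    (h0 : Filter.Tendsto e Filter.atTop (nhds 0)) : ∑' k, f k = e 0 := by
  have h1 := hf.hasSum.tendsto_sum_nat
  have h2 : (fun n => ∑ i ∈ Finset.range n, f i) = fun n => e 0 - e n := by
    funext n
    rw [Finset.sum_congr rfl (fun i _ => h i)]
    exact Finset.sum_range_sub' e n
  rw [h2] at h1
  have h3 : Filter.Tendsto (fun n => e 0 - e n) Filter.atTop (nhds (e 0 - 0)) :=
    tendsto_const_nhds.sub h0
  have := tendsto_nhds_unique h1 h3
  simpa using this

lemma contraction_unique {q z : ℂ} (hq : ‖q‖ < 1) (hz : ‖z‖ < 1) {u v g : ℕ → ℂ} {ρ M : ℝ}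
    (hρ : ρ < 1) (hg : ∀ n, ‖g n‖ ≤ ρ) (hM : ∀ n, ‖u n - v n‖ ≤ M)
    (hu : ∀ n, (1 - z * q^n) * u n = 1 + g n * u (n+1))
    (hv : ∀ n, (1 - z * q^n) * v n = 1 + g n * v (n+1)) : u 0 = v 0 := by
  set d : ℕ → ℂ := fun n => u n - v n with hd
  have hrec : ∀ n, (1 - z * q^n) * d n = g n * d (n+1) := by
    intro n
    simp only [hd]
    linear_combination (hu n) - (hv n)
  have key : ∀ n, qPoch z q n * d 0 = (∏ i ∈ Finset.range n, g i) * d n := by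
    intro n
    induction n with
    | zero => simp [qPoch]
    | succ m ih =>
      rw [qPoch] at ih ⊢
      rw [Finset.prod_range_succ, Finset.prod_range_succ]
      calc (∏ i ∈ Finset.range m, (1 - z * q ^ i)) * (1 - z * q ^ m) * d 0
          = (1 - z * q ^ m) * ((∏ i ∈ Finset.range m, (1 - z * q ^ i)) * d 0) := by ring
      _ = (1 - z * q ^ m) * ((∏ i ∈ Finset.range m, g i) * d m) := by rw [ih]
      _ = (∏ i ∈ Finset.range m, g i) * ((1 - z * q ^ m) * d m) := by ring
      _ = (∏ i ∈ Finset.range m, g i) * (g m * d (m+1)) := by rw [hrec m]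
      _ = _ := by ring
  obtain ⟨c, hc, hcb⟩ := norm_qPoch_lower hz hq
  have hρ0 : 0 ≤ ρ := le_trans (norm_nonneg _) (hg 0)
  have hM0 : 0 ≤ M := le_trans (norm_nonneg _) (hM 0)
  have hbound : ∀ n, c * ‖d 0‖ ≤ ρ^n * M := by
    intro n
    calc c * ‖d 0‖ ≤ ‖qPoch z q n‖ * ‖d 0‖ := by
          apply mul_le_mul_of_nonneg_right _ (norm_nonneg _)
          have := hcb 0 n
          simpa using this
    _ = ‖qPoch z q n * d 0‖ := (norm_mul _ _).symm
    _ = ‖(∏ i ∈ Finset.range n, g i) * d n‖ := by rw [key n]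
    _ = ‖∏ i ∈ Finset.range n, g i‖ * ‖d n‖ := norm_mul _ _
    _ ≤ ρ^n * M := by
        apply mul_le_mul _ (hM n) (norm_nonneg _) (by positivity)
        rw [norm_prod]
        calc ∏ i ∈ Finset.range n, ‖g i‖ ≤ ∏ i ∈ Finset.range n, ρ :=
              Finset.prod_le_prod (fun i _ => norm_nonneg _) (fun i _ => hg i)
        _ = ρ^n := by rw [Finset.prod_const, Finset.card_range]
  have hlim : Filter.Tendsto (fun n => ρ^n * M) Filter.atTop (nhds 0) := by
    have := tendsto_pow_atTop_nhds_zero_of_lt_one hρ0 hρ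
    simpa using this.mul_const M
  have h0 : c * ‖d 0‖ ≤ 0 := ge_of_tendsto' hlim hbound
  have : ‖d 0‖ = 0 := le_antisymm (by nlinarith) (norm_nonneg _)
  have : d 0 = 0 := norm_eq_zero.1 this
  have := sub_eq_zero.1 this
  exact this


lemma summable_geom_bound {f : ℕ → ℂ} {C r : ℝ} (hr0 : 0 ≤ r) (hr : r < 1)
    (h : ∀ k, ‖f k‖ ≤ r^k * C) : Summable f :=
  Summable.of_norm_bounded ((summable_geometric_of_lt_one hr0 hr).mul_right C) h

lemma norm_tsum_geom_bound {f : ℕ → ℂ} {C r : ℝ} (hr0 : 0 ≤ r) (hr : r < 1)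
    (h : ∀ k, ‖f k‖ ≤ r^k * C) : ‖∑' k, f k‖ ≤ (1-r)⁻¹ * C := by
  have hs : Summable (fun k => ‖f k‖) :=
    Summable.of_nonneg_of_le (fun k => norm_nonneg _) h
      ((summable_geometric_of_lt_one hr0 hr).mul_right C)
  calc ‖∑' k, f k‖ ≤ ∑' k, ‖f k‖ := norm_tsum_le_tsum_norm hs
  _ ≤ ∑' k : ℕ, r^k * C :=
      Summable.tsum_le_tsum h hs ((summable_geometric_of_lt_one hr0 hr).mul_right C)
  _ = (1-r)⁻¹ * C := by
      rw [tsum_mul_right, tsum_geometric_of_lt_one hr0 hr]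

lemma tendsto_zero_geom_bound {e : ℕ → ℂ} {C r : ℝ} (hr0 : 0 ≤ r) (hr : r < 1)
    (h : ∀ k, ‖e k‖ ≤ r^k * C) : Tendsto e atTop (nhds 0) := by
  rw [tendsto_zero_iff_norm_tendsto_zero]
  apply squeeze_zero (fun k => norm_nonneg _) h
  simpa using (tendsto_pow_atTop_nhds_zero_of_lt_one hr0 hr).mul_const C

lemma one_sub_ne {a q : ℂ} (ha : ‖a‖ < 1) (hq : ‖q‖ < 1) (i : ℕ) : (1:ℂ) - a * q ^ i ≠ 0 := by
  have := qPoch_ne_zero ha hq (i+1)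
  rw [qPoch_succ] at this
  exact fun h => this (by rw [h, mul_zero])

-- v1 functional equation
lemma v1_eq (q y w : ℂ) (hq : ‖q‖ < 1) (hy : ‖y‖ < 1) (hw : ‖w‖ < 1) :
    (1 - w) * (∑' k : ℕ, w ^ k / qPoch y q (k + 1)) =
      1 + y * (∑' k : ℕ, (w * q) ^ k / qPoch y q (k + 1)) := by
  obtain ⟨cy, hcy0, hcy⟩ := norm_qPoch_lower hy hq
  have hcy' : ∀ k, cy ≤ ‖qPoch y q k‖ := by
    intro k; have := hcy 0 k; simpa using this
  have hw0 : (0:ℝ) ≤ ‖w‖ := norm_nonneg w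
  have hwq : ‖w * q‖ ≤ ‖w‖ := by
    rw [norm_mul]
    nlinarith [norm_nonneg q]
  have hdiv : ∀ (x d : ℂ) (b c : ℝ), ‖x‖ ≤ b → 0 < c → c ≤ ‖d‖ → ‖x / d‖ ≤ b * c⁻¹ := by
    intro x d b c hx hc hd
    rw [norm_div, div_eq_mul_inv]
    apply mul_le_mul hx _ (by positivity) ((norm_nonneg x).trans hx)
    exact inv_anti₀ hc hd
  have hsa : Summable (fun k : ℕ => w ^ k / qPoch y q (k + 1)) := by
    apply summable_geom_bound hw0 hw
    intro k
    exact hdiv _ _ _ _ (by rw [norm_pow]) hcy0 (hcy' (k+1))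
  have hsb : Summable (fun k : ℕ => (w * q) ^ k / qPoch y q (k + 1)) := by
    apply summable_geom_bound hw0 hw
    intro k
    refine hdiv _ _ _ _ ?_ hcy0 (hcy' (k+1))
    rw [norm_pow]
    exact pow_le_pow_left₀ (norm_nonneg _) hwq k
  have key : (1 - w) * (∑' k : ℕ, w ^ k / qPoch y q (k + 1)) -
      y * (∑' k : ℕ, (w * q) ^ k / qPoch y q (k + 1)) = 1 := by
    rw [← tsum_mul_left, ← tsum_mul_left, ← Summable.tsum_sub (hsa.mul_left _) (hsb.mul_left _)]
    have hpt : ∀ k : ℕ, (1-w) * (w^k/qPoch y q (k+1)) - y * ((w*q)^k/qPoch y q (k+1))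
        = (fun k : ℕ => w ^ k / qPoch y q k) k - (fun k : ℕ => w ^ k / qPoch y q k) (k+1) := by
      intro k
      have hA : qPoch y q k ≠ 0 := qPoch_ne_zero hy hq k
      have hB : (1:ℂ) - y * q ^ k ≠ 0 := one_sub_ne hy hq k
      simp only []
      rw [qPoch_succ y q k]
      field_simp
      ring
    have htend : Tendsto (fun k : ℕ => w ^ k / qPoch y q k) atTop (nhds 0) := by
      apply tendsto_zero_geom_bound hw0 hw (C := cy⁻¹)
      intro k
      exact hdiv _ _ _ _ (by rw [norm_pow]) hcy0 (hcy' k)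
    rw [tsum_telescope ((hsa.mul_left _).sub (hsb.mul_left _)) hpt htend]
    simp [qPoch]
  linear_combination key

-- u1 functional equation
lemma u1_eq (q y w : ℂ) (hq : ‖q‖ < 1) (hy : ‖y‖ < 1) (hw : ‖w‖ < 1) :
    (1 - w) * (∑' k : ℕ, q ^ (k ^ 2) * (y * w) ^ k / (qPoch y q (k + 1) * qPoch w q (k + 1))) =
      1 + y * (∑' k : ℕ, q ^ (k ^ 2) * (y * (w * q)) ^ k /
        (qPoch y q (k + 1) * qPoch (w * q) q (k + 1))) := by
  obtain ⟨cy, hcy0, hcy⟩ := norm_qPoch_lower hy hq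
  obtain ⟨cw, hcw0, hcw⟩ := norm_qPoch_lower hw hq
  have hcy' : ∀ k, cy ≤ ‖qPoch y q k‖ := by
    intro k; have := hcy 0 k; simpa using this
  have hcw' : ∀ k, cw ≤ ‖qPoch w q k‖ := by
    intro k; have := hcw 0 k; simpa using this
  have hcwq : ∀ k, cw ≤ ‖qPoch (w * q) q k‖ := by
    intro k; have := hcw 1 k; simpa using this
  have hw0 : (0:ℝ) ≤ ‖w‖ := norm_nonneg w
  have hwq : ‖w * q‖ ≤ ‖w‖ := by
    rw [norm_mul]; nlinarith [norm_nonneg q]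
  have hwq1 : ‖w * q‖ < 1 := lt_of_le_of_lt hwq hw
  have hdiv : ∀ (x d : ℂ) (b c : ℝ), ‖x‖ ≤ b → 0 < c → c ≤ ‖d‖ → ‖x / d‖ ≤ b * c⁻¹ := by
    intro x d b c hx hc hd
    rw [norm_div, div_eq_mul_inv]
    apply mul_le_mul hx _ (by positivity) ((norm_nonneg x).trans hx)
    exact inv_anti₀ hc hd
  -- numerator bound
  have hnum : ∀ (a : ℂ) (k : ℕ), ‖a‖ ≤ ‖w‖ → ‖q ^ (k^2) * (y * a) ^ k‖ ≤ ‖w‖^k := by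
    intro a k ha
    rw [norm_mul, norm_pow, norm_pow]
    calc ‖q‖ ^ k^2 * ‖y * a‖ ^ k ≤ 1 * ‖w‖^k := by
          apply mul_le_mul (pow_le_one₀ (norm_nonneg q) hq.le) _ (by positivity) (by norm_num)
          apply pow_le_pow_left₀ (norm_nonneg _) _ k
          rw [norm_mul]
          nlinarith [norm_nonneg a, norm_nonneg y, (norm_nonneg a).trans ha]
    _ = ‖w‖^k := one_mul _
  have hden : ∀ (A B : ℂ) (cA cB : ℝ), 0 < cA → 0 < cB → cA ≤ ‖A‖ → cB ≤ ‖B‖ →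
      cA * cB ≤ ‖A * B‖ := by
    intro A B cA cB hA hB h1 h2
    rw [norm_mul]
    exact mul_le_mul h1 h2 hB.le (norm_nonneg _)
  have hsa : Summable (fun k : ℕ => q ^ (k ^ 2) * (y * w) ^ k /
      (qPoch y q (k + 1) * qPoch w q (k + 1))) := by
    apply summable_geom_bound hw0 hw (C := (cy*cw)⁻¹)
    intro k
    exact hdiv _ _ _ _ (hnum w k le_rfl) (by positivity)
      (hden _ _ _ _ hcy0 hcw0 (hcy' (k+1)) (hcw' (k+1)))
  have hsb : Summable (fun k : ℕ => q ^ (k ^ 2) * (y * (w * q)) ^ k /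
      (qPoch y q (k + 1) * qPoch (w * q) q (k + 1))) := by
    apply summable_geom_bound hw0 hw (C := (cy*cw)⁻¹)
    intro k
    exact hdiv _ _ _ _ (hnum (w*q) k hwq) (by positivity)
      (hden _ _ _ _ hcy0 hcw0 (hcy' (k+1)) (hcwq (k+1)))
  have key : (1 - w) * (∑' k : ℕ, q ^ (k ^ 2) * (y * w) ^ k /
        (qPoch y q (k + 1) * qPoch w q (k + 1))) -
      y * (∑' k : ℕ, q ^ (k ^ 2) * (y * (w * q)) ^ k /
        (qPoch y q (k + 1) * qPoch (w * q) q (k + 1))) = 1 := by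
    rw [← tsum_mul_left, ← tsum_mul_left, ← Summable.tsum_sub (hsa.mul_left _) (hsb.mul_left _)]
    have hpt : ∀ k : ℕ, (1-w) * (q ^ (k ^ 2) * (y * w) ^ k /
          (qPoch y q (k + 1) * qPoch w q (k + 1))) -
        y * (q ^ (k ^ 2) * (y * (w * q)) ^ k /
          (qPoch y q (k + 1) * qPoch (w * q) q (k + 1)))
        = (fun k : ℕ => q ^ (k ^ 2) * (y * w) ^ k / (qPoch y q k * qPoch (w * q) q k)) k -
          (fun k : ℕ => q ^ (k ^ 2) * (y * w) ^ k / (qPoch y q k * qPoch (w * q) q k)) (k+1) := by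
      intro k
      have hA : qPoch y q k ≠ 0 := qPoch_ne_zero hy hq k
      have hP : qPoch (w * q) q k ≠ 0 := qPoch_ne_zero hwq1 hq k
      have h1 : (1:ℂ) - y * q ^ k ≠ 0 := one_sub_ne hy hq k
      have h2 : (1:ℂ) - w ≠ 0 := by
        have := one_sub_ne hw hq 0
        simpa using this
      have h3 : (1:ℂ) - (w * q) * q ^ k ≠ 0 := one_sub_ne hwq1 hq k
      simp only []
      rw [qPoch_succ' w q k, qPoch_succ y q k, qPoch_succ (w*q) q k]
      rw [show (k+1)^2 = k^2 + (2*k+1) by ring, pow_add]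
      rw [mul_div_assoc', mul_div_assoc', div_sub_div _ _ (by simp [hA, hP, h1, h2, h3]) (by simp [hA, hP, h1, h2, h3]), div_sub_div _ _ (by simp [hA, hP, h1, h2, h3]) (by simp [hA, hP, h1, h2, h3]), div_eq_div_iff (by simp [hA, hP, h1, h2, h3]) (by simp [hA, hP, h1, h2, h3])]
      ring
    have htend : Tendsto (fun k : ℕ => q ^ (k ^ 2) * (y * w) ^ k /
        (qPoch y q k * qPoch (w * q) q k)) atTop (nhds 0) := by
      apply tendsto_zero_geom_bound hw0 hw (C := (cy*cw)⁻¹)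
      intro k
      exact hdiv _ _ _ _ (hnum w k le_rfl) (by positivity)
        (hden _ _ _ _ hcy0 hcw0 (hcy' k) (hcwq k))
    rw [tsum_telescope ((hsa.mul_left _).sub (hsb.mul_left _)) hpt htend]
    simp [qPoch]
  linear_combination key

lemma id1 (q y z : ℂ) (hq : ‖q‖ < 1) (hy : ‖y‖ < 1) (hz : ‖z‖ < 1) :
    ∑' k : ℕ, q ^ (k ^ 2) * (y * z) ^ k / (qPoch y q (k + 1) * qPoch z q (k + 1)) =
      ∑' k : ℕ, z ^ k / qPoch y q (k + 1) := by
  obtain ⟨cy, hcy0, hcy⟩ := norm_qPoch_lower hy hq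
  obtain ⟨cz, hcz0, hcz⟩ := norm_qPoch_lower hz hq
  have hcy' : ∀ k, cy ≤ ‖qPoch y q k‖ := by
    intro k; have := hcy 0 k; simpa using this
  have hz0 : (0:ℝ) ≤ ‖z‖ := norm_nonneg z
  have hwle : ∀ n : ℕ, ‖z * q ^ n‖ ≤ ‖z‖ := by
    intro n
    rw [norm_mul, norm_pow]
    nlinarith [pow_le_one₀ (norm_nonneg q) hq.le (n := n), pow_nonneg (norm_nonneg q) n]
  have hw1 : ∀ n : ℕ, ‖z * q ^ n‖ < 1 := fun n => lt_of_le_of_lt (hwle n) hz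
  have hdiv : ∀ (x d : ℂ) (b c : ℝ), ‖x‖ ≤ b → 0 < c → c ≤ ‖d‖ → ‖x / d‖ ≤ b * c⁻¹ := by
    intro x d b c hx hc hd
    rw [norm_div, div_eq_mul_inv]
    apply mul_le_mul hx _ (by positivity) ((norm_nonneg x).trans hx)
    exact inv_anti₀ hc hd
  -- uniform norm bounds on the two sequences
  have hub : ∀ n k, ‖q ^ (k ^ 2) * (y * (z * q ^ n)) ^ k /
      (qPoch y q (k + 1) * qPoch (z * q ^ n) q (k + 1))‖ ≤ ‖z‖^k * (cy*cz)⁻¹ := by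
    intro n k
    apply hdiv _ _ _ _ _ (by positivity)
    · rw [norm_mul]
      exact mul_le_mul (hcy' (k+1)) (hcz n (k+1)) hcz0.le (norm_nonneg _)
    · rw [norm_mul, norm_pow, norm_pow]
      have h1 : ‖y * (z * q ^ n)‖ ≤ ‖z‖ := by
        rw [norm_mul]
        nlinarith [norm_nonneg y, norm_nonneg (z * q^n), hwle n]
      calc ‖q‖ ^ k^2 * ‖y * (z * q ^ n)‖ ^ k ≤ 1 * ‖z‖^k := by
            apply mul_le_mul (pow_le_one₀ (norm_nonneg q) hq.le)
              (pow_le_pow_left₀ (norm_nonneg _) h1 k) (by positivity) (by norm_num)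
      _ = ‖z‖^k := one_mul _
  have hvb : ∀ n k, ‖(z * q ^ n) ^ k / qPoch y q (k + 1)‖ ≤ ‖z‖^k * cy⁻¹ := by
    intro n k
    apply hdiv _ _ _ _ _ hcy0 (hcy' (k+1))
    rw [norm_pow]
    exact pow_le_pow_left₀ (norm_nonneg _) (hwle n) k
  set M : ℝ := (1-‖z‖)⁻¹ * (cy*cz)⁻¹ + (1-‖z‖)⁻¹ * cy⁻¹ with hM
  have h0 := contraction_unique (q := q) (z := z) hq hz
    (u := fun n => ∑' k : ℕ, q ^ (k ^ 2) * (y * (z * q ^ n)) ^ k /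
      (qPoch y q (k + 1) * qPoch (z * q ^ n) q (k + 1)))
    (v := fun n => ∑' k : ℕ, (z * q ^ n) ^ k / qPoch y q (k + 1))
    (g := fun _ => y) (ρ := ‖y‖) (M := M) hy (fun n => le_rfl)
    (by
      intro n
      apply le_trans (norm_sub_le _ _)
      apply add_le_add
      · exact norm_tsum_geom_bound hz0 hz (hub n)
      · exact norm_tsum_geom_bound hz0 hz (hvb n))
    (by
      intro n
      have h := u1_eq q y (z * q ^ n) hq hy (hw1 n)
      have hww : (z * q ^ n) * q = z * q ^ (n+1) := by rw [pow_succ]; ring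
      simp only [hww] at h
      exact h)
    (by
      intro n
      have h := v1_eq q y (z * q ^ n) hq hy (hw1 n)
      have hww : (z * q ^ n) * q = z * q ^ (n+1) := by rw [pow_succ]; ring
      simp only [hww] at h
      exact h)
  simpa using h0

lemma nat_tri_succ (k : ℕ) : (k+1) * ((k+1) - 1) / 2 = k * (k-1) / 2 + k := by
  cases k with
  | zero => rfl
  | succ m =>
    simp only [Nat.add_sub_cancel]
    rw [show (m+1+1) * (m+1) = (m+1) * m + 2 * (m+1) by ring]
    rw [Nat.add_mul_div_left _ _ (by norm_num : 0 < 2)]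

lemma u2_eq (q y w : ℂ) (hq : ‖q‖ < 1) (hy : ‖y‖ < 1) (hw : ‖w‖ < 1) :
    (1 - w) * (∑' k : ℕ, (-1) ^ k * q ^ (k * (k - 1) / 2) * (y * w) ^ k / qPoch w q (k + 1)) =
      1 + (-(y * w)) * (∑' k : ℕ, (-1) ^ k * q ^ (k * (k - 1) / 2) * (y * (w * q)) ^ k /
        qPoch (w * q) q (k + 1)) := by
  obtain ⟨cw, hcw0, hcw⟩ := norm_qPoch_lower hw hq
  have hcw' : ∀ k, cw ≤ ‖qPoch w q k‖ := by
    intro k; have := hcw 0 k; simpa using this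
  have hcwq : ∀ k, cw ≤ ‖qPoch (w * q) q k‖ := by
    intro k; have := hcw 1 k; simpa using this
  have hw0 : (0:ℝ) ≤ ‖w‖ := norm_nonneg w
  have hwq : ‖w * q‖ ≤ ‖w‖ := by
    rw [norm_mul]; nlinarith [norm_nonneg q]
  have hwq1 : ‖w * q‖ < 1 := lt_of_le_of_lt hwq hw
  have hdiv : ∀ (x d : ℂ) (b c : ℝ), ‖x‖ ≤ b → 0 < c → c ≤ ‖d‖ → ‖x / d‖ ≤ b * c⁻¹ := by
    intro x d b c hx hc hd
    rw [norm_div, div_eq_mul_inv]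
    apply mul_le_mul hx _ (by positivity) ((norm_nonneg x).trans hx)
    exact inv_anti₀ hc hd
  have hnum : ∀ (a : ℂ) (k : ℕ), ‖a‖ ≤ ‖w‖ → ‖(-1:ℂ) ^ k * q ^ (k * (k-1)/2) * (y * a) ^ k‖ ≤ ‖w‖^k := by
    intro a k ha
    rw [norm_mul, norm_mul, norm_pow, norm_pow, norm_pow]
    have h1 : ‖y * a‖ ≤ ‖w‖ := by
      rw [norm_mul]
      nlinarith [norm_nonneg a, norm_nonneg y, (norm_nonneg a).trans ha]
    calc ‖(-1:ℂ)‖ ^ k * ‖q‖ ^ (k * (k-1)/2) * ‖y * a‖ ^ k ≤ 1 * 1 * ‖w‖^k := by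
          apply mul_le_mul _ (pow_le_pow_left₀ (norm_nonneg _) h1 k) (by positivity) (by norm_num)
          apply mul_le_mul _ (pow_le_one₀ (norm_nonneg q) hq.le) (by positivity) (by norm_num)
          simp
    _ = ‖w‖^k := by ring
  have hsa : Summable (fun k : ℕ => (-1:ℂ) ^ k * q ^ (k * (k - 1) / 2) * (y * w) ^ k /
      qPoch w q (k + 1)) := by
    apply summable_geom_bound hw0 hw (C := cw⁻¹)
    intro k
    exact hdiv _ _ _ _ (hnum w k le_rfl) hcw0 (hcw' (k+1))
  have hsb : Summable (fun k : ℕ => (-1:ℂ) ^ k * q ^ (k * (k - 1) / 2) * (y * (w * q)) ^ k /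
      qPoch (w * q) q (k + 1)) := by
    apply summable_geom_bound hw0 hw (C := cw⁻¹)
    intro k
    exact hdiv _ _ _ _ (hnum (w*q) k hwq) hcw0 (hcwq (k+1))
  have key : (1 - w) * (∑' k : ℕ, (-1) ^ k * q ^ (k * (k - 1) / 2) * (y * w) ^ k / qPoch w q (k + 1)) -
      (-(y * w)) * (∑' k : ℕ, (-1) ^ k * q ^ (k * (k - 1) / 2) * (y * (w * q)) ^ k /
        qPoch (w * q) q (k + 1)) = 1 := by
    rw [← tsum_mul_left, ← tsum_mul_left, ← Summable.tsum_sub (hsa.mul_left _) (hsb.mul_left _)]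
    have hpt : ∀ k : ℕ, (1 - w) * ((-1) ^ k * q ^ (k * (k - 1) / 2) * (y * w) ^ k / qPoch w q (k + 1)) -
        (-(y * w)) * ((-1) ^ k * q ^ (k * (k - 1) / 2) * (y * (w * q)) ^ k / qPoch (w * q) q (k + 1))
        = (fun k : ℕ => (-1) ^ k * q ^ (k * (k - 1) / 2) * (y * w) ^ k / qPoch (w * q) q k) k -
          (fun k : ℕ => (-1) ^ k * q ^ (k * (k - 1) / 2) * (y * w) ^ k / qPoch (w * q) q k) (k+1) := by
      intro k
      have hP : qPoch (w * q) q k ≠ 0 := qPoch_ne_zero hwq1 hq k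
      have h2 : (1:ℂ) - w ≠ 0 := by
        have := one_sub_ne hw hq 0
        simpa using this
      have h3 : (1:ℂ) - (w * q) * q ^ k ≠ 0 := one_sub_ne hwq1 hq k
      simp only []
      rw [qPoch_succ' w q k, qPoch_succ (w*q) q k, nat_tri_succ k, pow_add]
      field_simp
      ring
    have htend : Tendsto (fun k : ℕ => (-1:ℂ) ^ k * q ^ (k * (k - 1) / 2) * (y * w) ^ k /
        qPoch (w * q) q k) atTop (nhds 0) := by
      apply tendsto_zero_geom_bound hw0 hw (C := cw⁻¹)
      intro k
      exact hdiv _ _ _ _ (hnum w k le_rfl) hcw0 (hcwq k)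
    rw [tsum_telescope ((hsa.mul_left _).sub (hsb.mul_left _)) hpt htend]
    simp [qPoch]
  linear_combination key

lemma v2_eq (q y w : ℂ) (hq : ‖q‖ < 1) (hy : ‖y‖ < 1) (hw : ‖w‖ < 1) :
    (1 - w) * (∑' k : ℕ, qPoch y q k * w ^ k) =
      1 + (-(y * w)) * (∑' k : ℕ, qPoch y q k * (w * q) ^ k) := by
  obtain ⟨P, hP0, hP⟩ := norm_qPoch_upper (a := y) hq
  have hw0 : (0:ℝ) ≤ ‖w‖ := norm_nonneg w
  have hwq : ‖w * q‖ ≤ ‖w‖ := by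
    rw [norm_mul]; nlinarith [norm_nonneg q]
  have hsa : Summable (fun k : ℕ => qPoch y q k * w ^ k) := by
    apply summable_geom_bound hw0 hw (C := P)
    intro k
    rw [norm_mul, norm_pow, mul_comm]
    exact mul_le_mul_of_nonneg_left (hP k) (by positivity)
  have hsb : Summable (fun k : ℕ => qPoch y q k * (w * q) ^ k) := by
    apply summable_geom_bound hw0 hw (C := P)
    intro k
    rw [norm_mul, norm_pow]
    calc ‖qPoch y q k‖ * ‖w * q‖ ^ k ≤ P * ‖w‖^k := by
          apply mul_le_mul (hP k) (pow_le_pow_left₀ (norm_nonneg _) hwq k) (by positivity) hP0.le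
    _ = ‖w‖^k * P := mul_comm _ _
  have key : (1 - w) * (∑' k : ℕ, qPoch y q k * w ^ k) -
      (-(y * w)) * (∑' k : ℕ, qPoch y q k * (w * q) ^ k) = 1 := by
    rw [← tsum_mul_left, ← tsum_mul_left, ← Summable.tsum_sub (hsa.mul_left _) (hsb.mul_left _)]
    have hpt : ∀ k : ℕ, (1 - w) * (qPoch y q k * w ^ k) - (-(y * w)) * (qPoch y q k * (w * q) ^ k)
        = (fun k : ℕ => qPoch y q k * w ^ k) k - (fun k : ℕ => qPoch y q k * w ^ k) (k+1) := by
      intro k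
      simp only []
      rw [qPoch_succ y q k]
      ring
    have htend : Tendsto (fun k : ℕ => qPoch y q k * w ^ k) atTop (nhds 0) := by
      apply tendsto_zero_geom_bound hw0 hw (C := P)
      intro k
      rw [norm_mul, norm_pow, mul_comm]
      exact mul_le_mul_of_nonneg_left (hP k) (by positivity)
    rw [tsum_telescope ((hsa.mul_left _).sub (hsb.mul_left _)) hpt htend]
    simp [qPoch]
  linear_combination key

lemma id2 (q y z : ℂ) (hq : ‖q‖ < 1) (hy : ‖y‖ < 1) (hz : ‖z‖ < 1) :
    ∑' k : ℕ, (-1) ^ k * q ^ (k * (k - 1) / 2) * (y * z) ^ k / qPoch z q (k + 1) =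
      ∑' k : ℕ, qPoch y q k * z ^ k := by
  obtain ⟨cz, hcz0, hcz⟩ := norm_qPoch_lower hz hq
  obtain ⟨P, hP0, hP⟩ := norm_qPoch_upper (a := y) hq
  have hz0 : (0:ℝ) ≤ ‖z‖ := norm_nonneg z
  have hwle : ∀ n : ℕ, ‖z * q ^ n‖ ≤ ‖z‖ := by
    intro n
    rw [norm_mul, norm_pow]
    nlinarith [pow_le_one₀ (norm_nonneg q) hq.le (n := n), pow_nonneg (norm_nonneg q) n]
  have hw1 : ∀ n : ℕ, ‖z * q ^ n‖ < 1 := fun n => lt_of_le_of_lt (hwle n) hz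
  have hdiv : ∀ (x d : ℂ) (b c : ℝ), ‖x‖ ≤ b → 0 < c → c ≤ ‖d‖ → ‖x / d‖ ≤ b * c⁻¹ := by
    intro x d b c hx hc hd
    rw [norm_div, div_eq_mul_inv]
    apply mul_le_mul hx _ (by positivity) ((norm_nonneg x).trans hx)
    exact inv_anti₀ hc hd
  have hub : ∀ n k, ‖(-1:ℂ) ^ k * q ^ (k * (k - 1) / 2) * (y * (z * q ^ n)) ^ k /
      qPoch (z * q ^ n) q (k + 1)‖ ≤ ‖z‖^k * cz⁻¹ := by
    intro n k
    apply hdiv _ _ _ _ _ hcz0 (hcz n (k+1))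
    rw [norm_mul, norm_mul, norm_pow, norm_pow, norm_pow]
    have h1 : ‖y * (z * q ^ n)‖ ≤ ‖z‖ := by
      rw [norm_mul]
      nlinarith [norm_nonneg y, norm_nonneg (z * q^n), hwle n]
    calc ‖(-1:ℂ)‖ ^ k * ‖q‖ ^ (k * (k-1)/2) * ‖y * (z * q ^ n)‖ ^ k ≤ 1 * 1 * ‖z‖^k := by
          apply mul_le_mul _ (pow_le_pow_left₀ (norm_nonneg _) h1 k) (by positivity) (by norm_num)
          apply mul_le_mul _ (pow_le_one₀ (norm_nonneg q) hq.le) (by positivity) (by norm_num)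
          simp
    _ = ‖z‖^k := by ring
  have hvb : ∀ n k, ‖qPoch y q k * (z * q ^ n) ^ k‖ ≤ ‖z‖^k * P := by
    intro n k
    rw [norm_mul, norm_pow]
    calc ‖qPoch y q k‖ * ‖z * q ^ n‖ ^ k ≤ P * ‖z‖^k := by
          apply mul_le_mul (hP k) (pow_le_pow_left₀ (norm_nonneg _) (hwle n) k)
            (by positivity) hP0.le
    _ = ‖z‖^k * P := mul_comm _ _
  set M : ℝ := (1-‖z‖)⁻¹ * cz⁻¹ + (1-‖z‖)⁻¹ * P with hM
  have h0 := contraction_unique (q := q) (z := z) hq hz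
    (u := fun n => ∑' k : ℕ, (-1) ^ k * q ^ (k * (k - 1) / 2) * (y * (z * q ^ n)) ^ k /
      qPoch (z * q ^ n) q (k + 1))
    (v := fun n => ∑' k : ℕ, qPoch y q k * (z * q ^ n) ^ k)
    (g := fun n => -(y * (z * q ^ n))) (ρ := ‖y‖) (M := M) hy
    (by
      intro n
      rw [norm_neg, norm_mul]
      nlinarith [norm_nonneg y, norm_nonneg (z * q^n), hwle n, hw1 n])
    (by
      intro n
      apply le_trans (norm_sub_le _ _)
      apply add_le_add
      · exact norm_tsum_geom_bound hz0 hz (hub n)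
      · exact norm_tsum_geom_bound hz0 hz (hvb n))
    (by
      intro n
      have h := u2_eq q y (z * q ^ n) hq hy (hw1 n)
      have hww : (z * q ^ n) * q = z * q ^ (n+1) := by rw [pow_succ]; ring
      simp only [hww] at h
      exact h)
    (by
      intro n
      have h := v2_eq q y (z * q ^ n) hq hy (hw1 n)
      have hww : (z * q ^ n) * q = z * q ^ (n+1) := by rw [pow_succ]; ring
      simp only [hww] at h
      exact h)
  simpa using h0

theorem stmt_19 (q y z : ℂ) (hq : ‖q‖ < 1) (hy : ‖y‖ < 1) (hz : ‖z‖ < 1) :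
    (∑' k : ℕ, q ^ (k ^ 2) * (y * z) ^ k / (qPoch y q (k + 1) * qPoch z q (k + 1)) =
      ∑' k : ℕ, z ^ k / qPoch y q (k + 1)) ∧
    (∑' k : ℕ, (-1) ^ k * q ^ (k * (k - 1) / 2) * (y * z) ^ k / qPoch z q (k + 1) =
      ∑' k : ℕ, qPoch y q k * z ^ k) :=
  ⟨id1 q y z hq hy hz, id2 q y z hq hy hz⟩
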